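/- Let Σ_c and Σ̃_c be k×k real matrices and Σ_r and Σ̃_r be n×n real matrices with Σ_c ⊗ Σ_r = Σ̃_c ⊗ Σ̃_r and Σ_c ⊗ Σ_r ≠ 0. Then there exists a nonzero real number m such that Σ̃_c = m·Σ_c and Σ̃_r = m⁻¹·Σ_r. Moreover, if in addition the (1,1) entries satisfy (Σ_c)_{11} = (Σ̃_c)_{11} = 1, then Σ̃_c = Σ_c and Σ̃_r = Σ_r. -/

import Mathlib

open Matrix
open scoped Kronecker

/-- The factors of a nonzero Kronecker product are determined up to a reciprocal scale
factor; normalizing the (1,1) entry of the column-wise factor to `1` makes them unique. -/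
theorem kronecker_factors_unique_up_to_scale {n k : ℕ} (hk : 0 < k) (hn : 0 < n)
    (Sc Sct : Matrix (Fin k) (Fin k) ℝ) (Sr Srt : Matrix (Fin n) (Fin n) ℝ)
    (heq : Sc ⊗ₖ Sr = Sct ⊗ₖ Srt)
    (hne : Sc ⊗ₖ Sr ≠ 0) :
    (∃ m : ℝ, m ≠ 0 ∧ Sct = m • Sc ∧ Srt = m⁻¹ • Sr) ∧
      ((Sc ⟨0, hk⟩ ⟨0, hk⟩ = 1 ∧ Sct ⟨0, hk⟩ ⟨0, hk⟩ = 1) → Sct = Sc ∧ Srt = Sr) := by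
  -- find a nonzero entry
  have hex : ∃ p q, (Sc ⊗ₖ Sr) p q ≠ 0 := by
    by_contra h
    push_neg at h
    exact hne (Matrix.ext fun p q => h p q)
  obtain ⟨⟨i0, a0⟩, ⟨j0, b0⟩, hpq⟩ := hex
  have hE : ∀ (i j : Fin k) (a b : Fin n),
      Sc i j * Sr a b = Sct i j * Srt a b := fun i j a b => by
    have := congrFun (congrFun heq (i, a)) (j, b)
    simpa [Matrix.kroneckerMap_apply] using this
  have hbase : Sc i0 j0 * Sr a0 b0 ≠ 0 := by
    simpa [Matrix.kroneckerMap_apply] using hpq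
  have hc : Sc i0 j0 ≠ 0 := left_ne_zero_of_mul hbase
  have hr : Sr a0 b0 ≠ 0 := right_ne_zero_of_mul hbase
  have hbase' : Sct i0 j0 * Srt a0 b0 ≠ 0 := (hE i0 j0 a0 b0) ▸ hbase
  have hct : Sct i0 j0 ≠ 0 := left_ne_zero_of_mul hbase'
  have hrt : Srt a0 b0 ≠ 0 := right_ne_zero_of_mul hbase'
  set m : ℝ := Sct i0 j0 / Sc i0 j0 with hm
  have hm0 : m ≠ 0 := div_ne_zero hct hc
  have hSct : Sct = m • Sc := by
    ext i j
    have h1 := hE i j a0 b0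
    have h2 := hE i0 j0 a0 b0
    have hrtval : Srt a0 b0 = Sc i0 j0 * Sr a0 b0 / Sct i0 j0 := by
      field_simp at h2 ⊢; linarith
    rw [hrtval] at h1
    simp only [Matrix.smul_apply, smul_eq_mul, hm]
    field_simp at h1 ⊢
    have key : (Sct i j * Sc i0 j0) * Sr a0 b0 = (Sct i0 j0 * Sc i j) * Sr a0 b0 := by
      linear_combination (-Sr a0 b0) * h1
    have := mul_right_cancel₀ hr key
    linarith
  have hSrt : Srt = m⁻¹ • Sr := by
    ext a b
    have h1 := hE i0 j0 a b
    rw [hSct] at h1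
    simp only [Matrix.smul_apply, smul_eq_mul] at h1 ⊢
    have : Sc i0 j0 * Sr a b = m * Sc i0 j0 * Srt a b := by linarith [h1]
    field_simp
    have key : (Srt a b * m) * Sc i0 j0 = Sr a b * Sc i0 j0 := by nlinarith [this]
    have := mul_right_cancel₀ hc key
    linarith
  refine ⟨⟨m, hm0, hSct, hSrt⟩, ?_⟩
  rintro ⟨h1, h2⟩
  have : (1 : ℝ) = m * 1 := by
    have := congrFun (congrFun hSct ⟨0, hk⟩) ⟨0, hk⟩
    simpa [h1, h2] using this
  have hm1 : m = 1 := by linarith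
  constructor
  · rw [hSct, hm1, one_smul]
  · rw [hSrt, hm1, inv_one, one_smul]
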